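/- Suppose T = [[A, B],[0, C]] and T' = [[A', B'],[0, C']] are 2×2 upper triangular operators with AB = BC, A'B' = B'C', and the pair (A, C) satisfies Property (H) (ker τ_{A,C} ∩ ran τ_{A,C} = {0}). If X = [[X_{11}, X_{12}],[0, X_{22}]] is an invertible upper triangular operator with X T' = T X (so X_{11} A' = A X_{11}, X_{22} C' = C X_{22}, with X_{11}, X_{22} invertible), then B = X_{11} B' X_{22}^{-1}; equivalently, the diagonal part Diag(X) = X_{11} ⊕ X_{22} also intertwines T' and T. -/
import Mathlib


open ContinuousLinearMap

/-- If `T = [[A,B],[0,C]]` and `T' = [[A',B'],[0,C']]` with `AB = BC`, `A'B' = B'C'`,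
the pair `(A, C)` satisfies Property (H), and `X = [[X11,X12],[0,X22]]` is an
invertible upper-triangular operator with `X T' = T X`, then `B = X11 B' X22⁻¹`. -/
theorem propertyH_diagonal_intertwiner
    {H1 H2 H1' H2' : Type*}
    [NormedAddCommGroup H1] [NormedSpace ℂ H1] [NormedAddCommGroup H2] [NormedSpace ℂ H2]
    [NormedAddCommGroup H1'] [NormedSpace ℂ H1'] [NormedAddCommGroup H2'] [NormedSpace ℂ H2']
    (A : H1 →L[ℂ] H1) (C : H2 →L[ℂ] H2) (B : H2 →L[ℂ] H1)
    (A' : H1' →L[ℂ] H1') (C' : H2' →L[ℂ] H2') (B' : H2' →L[ℂ] H1')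
    (X11 : H1' →L[ℂ] H1) (X12 : H2' →L[ℂ] H1) (X22 : H2' →L[ℂ] H2)
    (X11inv : H1 →L[ℂ] H1') (X22inv : H2 →L[ℂ] H2')
    (hX11l : X11 ∘L X11inv = ContinuousLinearMap.id ℂ H1)
    (hX11r : X11inv ∘L X11 = ContinuousLinearMap.id ℂ H1')
    (hX22l : X22 ∘L X22inv = ContinuousLinearMap.id ℂ H2)
    (hX22r : X22inv ∘L X22 = ContinuousLinearMap.id ℂ H2')
    (hAB : A ∘L B = B ∘L C) (hA'B' : A' ∘L B' = B' ∘L C')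
    (hH : ∀ Z : H2 →L[ℂ] H1, A ∘L Z = Z ∘L C →
      (∃ W : H2 →L[ℂ] H1, Z = A ∘L W - W ∘L C) → Z = 0)
    (h11 : X11 ∘L A' = A ∘L X11)
    (h22 : X22 ∘L C' = C ∘L X22)
    (h12 : X11 ∘L B' + X12 ∘L C' = A ∘L X12 + B ∘L X22) :
    B = X11 ∘L B' ∘L X22inv := by
  have hC' : C' ∘L X22inv = X22inv ∘L C := by
    have h := congrArg (fun M => X22inv ∘L M ∘L X22inv) h22
    simp only [comp_assoc] at h
    rw [← comp_assoc X22inv X22, hX22r, id_comp, hX22l, comp_id] at h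
    exact h
  set Z := X11 ∘L B' ∘L X22inv - B with hZ
  have hcomm : A ∘L Z = Z ∘L C := by
    rw [hZ, comp_sub, sub_comp, hAB]
    congr 1
    calc A ∘L (X11 ∘L B' ∘L X22inv) = (A ∘L X11) ∘L (B' ∘L X22inv) := by
          simp only [comp_assoc]
      _ = (X11 ∘L A') ∘L (B' ∘L X22inv) := by rw [h11]
      _ = X11 ∘L (A' ∘L B') ∘L X22inv := by simp only [comp_assoc]
      _ = X11 ∘L (B' ∘L C') ∘L X22inv := by rw [hA'B']
      _ = (X11 ∘L B') ∘L (C' ∘L X22inv) := by simp only [comp_assoc]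
      _ = (X11 ∘L B') ∘L (X22inv ∘L C) := by rw [hC']
      _ = (X11 ∘L B' ∘L X22inv) ∘L C := by simp only [comp_assoc]
  have hran : ∃ W : H2 →L[ℂ] H1, Z = A ∘L W - W ∘L C := by
    refine ⟨X12 ∘L X22inv, ?_⟩
    have h := congrArg (fun M => M ∘L X22inv) h12
    simp only [add_comp, comp_assoc] at h
    rw [hC', hX22l, comp_id] at h
    rw [hZ, comp_assoc X12 X22inv C, sub_eq_sub_iff_add_eq_add]
    exact h
  have hz0 := hH Z hcomm hran
  have := sub_eq_zero.mp hz0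
  exact this.symm
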